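/- Lipschitz stability of constrained least-squares in target: For target vectors ϑ₁, ϑ₂ ∈ B_W, define θ_{ϑᵢ} = argmin_{||θ||≤W} E[(r + γ ϑᵢᵀφ(s',π) − θᵀφ(s,a))²]. Then ||θ_{ϑ₁} − θ_{ϑ₂}||²_Σ ≤ 2γW||ϑ₁ − ϑ₂||₂, where Σ = E[φ(s,a)φ(s,a)ᵀ], and ||φ||₂ ≤ 1 everywhere. -/

import Mathlib

open Finset

lemma foc_aux (d : ℕ) (Ω : Type) [Fintype Ω]
    (ν : Ω → ℝ) (hν0 : ∀ ω, 0 ≤ ν ω)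
    (φ : Ω → EuclideanSpace ℝ (Fin d)) (c : Ω → ℝ)
    (W : ℝ) (θ θ' : EuclideanSpace ℝ (Fin d))
    (hθ : ‖θ‖ ≤ W) (hθ' : ‖θ'‖ ≤ W)
    (hopt : ∀ u : EuclideanSpace ℝ (Fin d), ‖u‖ ≤ W →
      ∑ ω, ν ω * (c ω - (inner ℝ θ (φ ω) : ℝ)) ^ 2
        ≤ ∑ ω, ν ω * (c ω - (inner ℝ u (φ ω) : ℝ)) ^ 2) :
    ∑ ω, ν ω * ((c ω - (inner ℝ θ (φ ω) : ℝ)) * (inner ℝ (θ' - θ) (φ ω) : ℝ)) ≤ 0 := by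
  set δ := θ' - θ with hδ
  set S := ∑ ω, ν ω * ((c ω - (inner ℝ θ (φ ω) : ℝ)) * (inner ℝ δ (φ ω) : ℝ)) with hS
  set Q := ∑ ω, ν ω * ((inner ℝ δ (φ ω) : ℝ)) ^ 2 with hQ
  have hQ0 : 0 ≤ Q := Finset.sum_nonneg fun ω _ => mul_nonneg (hν0 ω) (sq_nonneg _)
  have expand : ∀ t : ℝ,
      ∑ ω, ν ω * (c ω - (inner ℝ (θ + t • δ) (φ ω) : ℝ)) ^ 2
        = (∑ ω, ν ω * (c ω - (inner ℝ θ (φ ω) : ℝ)) ^ 2) - 2 * t * S + t ^ 2 * Q := by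
    intro t
    have h : ∀ ω : Ω, ν ω * (c ω - (inner ℝ (θ + t • δ) (φ ω) : ℝ)) ^ 2
        = ν ω * (c ω - (inner ℝ θ (φ ω) : ℝ)) ^ 2
          - 2 * t * (ν ω * ((c ω - (inner ℝ θ (φ ω) : ℝ)) * (inner ℝ δ (φ ω) : ℝ)))
          + t ^ 2 * (ν ω * ((inner ℝ δ (φ ω) : ℝ)) ^ 2) := by
      intro ω
      rw [inner_add_left, real_inner_smul_left]
      ring
    rw [Finset.sum_congr rfl fun ω _ => h ω, Finset.sum_add_distrib,
      Finset.sum_sub_distrib, ← Finset.mul_sum, ← Finset.mul_sum]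
  have feas : ∀ t : ℝ, 0 ≤ t → t ≤ 1 → ‖θ + t • δ‖ ≤ W := by
    intro t ht0 ht1
    have : θ + t • δ = (1 - t) • θ + t • θ' := by
      rw [hδ]; module
    rw [this]
    calc ‖(1 - t) • θ + t • θ'‖ ≤ ‖(1 - t) • θ‖ + ‖t • θ'‖ := norm_add_le _ _
      _ = (1 - t) * ‖θ‖ + t * ‖θ'‖ := by
          rw [norm_smul, norm_smul, Real.norm_of_nonneg (by linarith),
            Real.norm_of_nonneg ht0]
      _ ≤ (1 - t) * W + t * W := by
          have h1 : 0 ≤ 1 - t := by linarith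
          have hW0 : 0 ≤ ‖θ‖ := norm_nonneg _
          nlinarith [mul_le_mul_of_nonneg_left hθ h1, mul_le_mul_of_nonneg_left hθ' ht0]
      _ = W := by ring
  have key : ∀ t : ℝ, 0 ≤ t → t ≤ 1 → 2 * t * S ≤ t ^ 2 * Q := by
    intro t ht0 ht1
    have := hopt (θ + t • δ) (feas t ht0 ht1)
    rw [expand t] at this
    linarith
  by_contra hpos
  push_neg at hpos
  set t := min 1 (S / (Q + 1)) with ht
  have hQ1 : 0 < Q + 1 := by linarith
  have ht0 : 0 < t := lt_min one_pos (div_pos hpos hQ1)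
  have ht1 : t ≤ 1 := min_le_left _ _
  have ht2 : t * (Q + 1) ≤ S := by
    have : t ≤ S / (Q + 1) := min_le_right _ _
    calc t * (Q + 1) ≤ (S / (Q + 1)) * (Q + 1) := by nlinarith
      _ = S := by field_simp
  have hk := key t ht0.le ht1
  nlinarith [mul_pos ht0 hpos]

theorem least_squares_target_lipschitz
    (d : ℕ) (Ω : Type) [Fintype Ω]
    (ν : Ω → ℝ) (φ ψ : Ω → EuclideanSpace ℝ (Fin d)) (r : Ω → ℝ)
    (γ W : ℝ) (hγ0 : 0 ≤ γ) (hγ1 : γ < 1) (hW : 0 < W)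
    (hν0 : ∀ ω, 0 ≤ ν ω) (hν1 : ∑ ω, ν ω = 1)
    (hφ : ∀ ω, ‖φ ω‖ ≤ 1) (hψ : ∀ ω, ‖ψ ω‖ ≤ 1) (hr : ∀ ω, |r ω| ≤ 1)
    (ϑ₁ ϑ₂ θ₁ θ₂ : EuclideanSpace ℝ (Fin d))
    (hϑ₁ : ‖ϑ₁‖ ≤ W) (hϑ₂ : ‖ϑ₂‖ ≤ W)
    (hθ₁W : ‖θ₁‖ ≤ W) (hθ₂W : ‖θ₂‖ ≤ W)
    (hθ₁ : ∀ θ : EuclideanSpace ℝ (Fin d), ‖θ‖ ≤ W →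
      ∑ ω, ν ω * (r ω + γ * (inner ℝ ϑ₁ (ψ ω) : ℝ) - (inner ℝ θ₁ (φ ω) : ℝ)) ^ 2
        ≤ ∑ ω, ν ω * (r ω + γ * (inner ℝ ϑ₁ (ψ ω) : ℝ) - (inner ℝ θ (φ ω) : ℝ)) ^ 2)
    (hθ₂ : ∀ θ : EuclideanSpace ℝ (Fin d), ‖θ‖ ≤ W →
      ∑ ω, ν ω * (r ω + γ * (inner ℝ ϑ₂ (ψ ω) : ℝ) - (inner ℝ θ₂ (φ ω) : ℝ)) ^ 2
        ≤ ∑ ω, ν ω * (r ω + γ * (inner ℝ ϑ₂ (ψ ω) : ℝ) - (inner ℝ θ (φ ω) : ℝ)) ^ 2) :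
    ∑ ω, ν ω * ((inner ℝ (θ₁ - θ₂) (φ ω) : ℝ)) ^ 2 ≤ 2 * γ * W * ‖ϑ₁ - ϑ₂‖ := by
  have h1 := foc_aux d Ω ν hν0 φ (fun ω => r ω + γ * (inner ℝ ϑ₁ (ψ ω) : ℝ)) W θ₁ θ₂
    hθ₁W hθ₂W hθ₁
  have h2 := foc_aux d Ω ν hν0 φ (fun ω => r ω + γ * (inner ℝ ϑ₂ (ψ ω) : ℝ)) W θ₂ θ₁
    hθ₂W hθ₁W hθ₂
  -- rewrite inner products of differences
  have e1 : ∀ ω : Ω, (inner ℝ (θ₂ - θ₁) (φ ω) : ℝ) = -(inner ℝ (θ₁ - θ₂) (φ ω) : ℝ) := by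
    intro ω; rw [← inner_neg_left]; congr 1; abel
  have e2 : ∀ ω : Ω, (inner ℝ (θ₁ - θ₂) (φ ω) : ℝ)
      = (inner ℝ θ₁ (φ ω) : ℝ) - (inner ℝ θ₂ (φ ω) : ℝ) := fun ω => inner_sub_left _ _ _
  -- key combined inequality
  have hcomb : ∑ ω, ν ω * ((inner ℝ (θ₁ - θ₂) (φ ω) : ℝ)) ^ 2
      ≤ ∑ ω, ν ω * (γ * (inner ℝ (ϑ₁ - ϑ₂) (ψ ω) : ℝ) * (inner ℝ (θ₁ - θ₂) (φ ω) : ℝ)) := by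
    have e3 : ∀ ω : Ω, (inner ℝ (ϑ₁ - ϑ₂) (ψ ω) : ℝ)
        = (inner ℝ ϑ₁ (ψ ω) : ℝ) - (inner ℝ ϑ₂ (ψ ω) : ℝ) := fun ω => inner_sub_left _ _ _
    have expand : ∀ ω : Ω,
        ν ω * ((inner ℝ (θ₁ - θ₂) (φ ω) : ℝ)) ^ 2
          - ν ω * (γ * (inner ℝ (ϑ₁ - ϑ₂) (ψ ω) : ℝ) * (inner ℝ (θ₁ - θ₂) (φ ω) : ℝ))
        = ν ω * ((r ω + γ * (inner ℝ ϑ₁ (ψ ω) : ℝ) - (inner ℝ θ₁ (φ ω) : ℝ)) * (inner ℝ (θ₂ - θ₁) (φ ω) : ℝ))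
          + ν ω * ((r ω + γ * (inner ℝ ϑ₂ (ψ ω) : ℝ) - (inner ℝ θ₂ (φ ω) : ℝ)) * (inner ℝ (θ₁ - θ₂) (φ ω) : ℝ)) := by
      intro ω
      rw [e1 ω, e2 ω, e3 ω]
      ring
    have hsum : ∑ ω, (ν ω * ((inner ℝ (θ₁ - θ₂) (φ ω) : ℝ)) ^ 2
          - ν ω * (γ * (inner ℝ (ϑ₁ - ϑ₂) (ψ ω) : ℝ) * (inner ℝ (θ₁ - θ₂) (φ ω) : ℝ))) ≤ 0 := by
      rw [Finset.sum_congr rfl fun ω _ => expand ω, Finset.sum_add_distrib]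
      linarith
    rw [Finset.sum_sub_distrib] at hsum
    linarith
  -- bound the right-hand side
  have hbound : ∑ ω, ν ω * (γ * (inner ℝ (ϑ₁ - ϑ₂) (ψ ω) : ℝ) * (inner ℝ (θ₁ - θ₂) (φ ω) : ℝ))
      ≤ 2 * γ * W * ‖ϑ₁ - ϑ₂‖ := by
    have : ∀ ω : Ω, ν ω * (γ * (inner ℝ (ϑ₁ - ϑ₂) (ψ ω) : ℝ) * (inner ℝ (θ₁ - θ₂) (φ ω) : ℝ))
        ≤ ν ω * (2 * γ * W * ‖ϑ₁ - ϑ₂‖) := by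
      intro ω
      apply mul_le_mul_of_nonneg_left _ (hν0 ω)
      have h₁ : |(inner ℝ (ϑ₁ - ϑ₂) (ψ ω) : ℝ)| ≤ ‖ϑ₁ - ϑ₂‖ := by
        calc |(inner ℝ (ϑ₁ - ϑ₂) (ψ ω) : ℝ)| ≤ ‖ϑ₁ - ϑ₂‖ * ‖ψ ω‖ := abs_real_inner_le_norm _ _
          _ ≤ ‖ϑ₁ - ϑ₂‖ * 1 := mul_le_mul_of_nonneg_left (hψ ω) (norm_nonneg _)
          _ = ‖ϑ₁ - ϑ₂‖ := mul_one _
      have h₂ : |(inner ℝ (θ₁ - θ₂) (φ ω) : ℝ)| ≤ 2 * W := by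
        calc |(inner ℝ (θ₁ - θ₂) (φ ω) : ℝ)| ≤ ‖θ₁ - θ₂‖ * ‖φ ω‖ := abs_real_inner_le_norm _ _
          _ ≤ ‖θ₁ - θ₂‖ * 1 := mul_le_mul_of_nonneg_left (hφ ω) (norm_nonneg _)
          _ = ‖θ₁ - θ₂‖ := mul_one _
          _ ≤ ‖θ₁‖ + ‖θ₂‖ := norm_sub_le _ _
          _ ≤ 2 * W := by linarith
      have habs : |γ * (inner ℝ (ϑ₁ - ϑ₂) (ψ ω) : ℝ) * (inner ℝ (θ₁ - θ₂) (φ ω) : ℝ)|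
          ≤ γ * ‖ϑ₁ - ϑ₂‖ * (2 * W) := by
        rw [abs_mul, abs_mul, abs_of_nonneg hγ0]
        have h1' : 0 ≤ |(inner ℝ (ϑ₁ - ϑ₂) (ψ ω) : ℝ)| := abs_nonneg _
        have h2' : 0 ≤ |(inner ℝ (θ₁ - θ₂) (φ ω) : ℝ)| := abs_nonneg _
        have hn : 0 ≤ ‖ϑ₁ - ϑ₂‖ := norm_nonneg _
        have hm := mul_le_mul h₁ h₂ h2' hn
        calc γ * |(inner ℝ (ϑ₁ - ϑ₂) (ψ ω) : ℝ)| * |(inner ℝ (θ₁ - θ₂) (φ ω) : ℝ)|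
            = γ * (|(inner ℝ (ϑ₁ - ϑ₂) (ψ ω) : ℝ)| * |(inner ℝ (θ₁ - θ₂) (φ ω) : ℝ)|) := by ring
          _ ≤ γ * (‖ϑ₁ - ϑ₂‖ * (2 * W)) := mul_le_mul_of_nonneg_left hm hγ0
          _ = γ * ‖ϑ₁ - ϑ₂‖ * (2 * W) := by ring
      calc γ * (inner ℝ (ϑ₁ - ϑ₂) (ψ ω) : ℝ) * (inner ℝ (θ₁ - θ₂) (φ ω) : ℝ)
          ≤ |γ * (inner ℝ (ϑ₁ - ϑ₂) (ψ ω) : ℝ) * (inner ℝ (θ₁ - θ₂) (φ ω) : ℝ)| := le_abs_self _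
        _ ≤ γ * ‖ϑ₁ - ϑ₂‖ * (2 * W) := habs
        _ = 2 * γ * W * ‖ϑ₁ - ϑ₂‖ := by ring
    calc ∑ ω, ν ω * (γ * (inner ℝ (ϑ₁ - ϑ₂) (ψ ω) : ℝ) * (inner ℝ (θ₁ - θ₂) (φ ω) : ℝ))
        ≤ ∑ ω, ν ω * (2 * γ * W * ‖ϑ₁ - ϑ₂‖) := Finset.sum_le_sum fun ω _ => this ω
      _ = (∑ ω, ν ω) * (2 * γ * W * ‖ϑ₁ - ϑ₂‖) := by rw [← Finset.sum_mul]
      _ = 2 * γ * W * ‖ϑ₁ - ϑ₂‖ := by rw [hν1, one_mul]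
  linarith
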